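/- The function f(x) = (4x+1 - 4/((4x+1)π²)) / (4x+3 - 4/((4x+3)π²)) is strictly increasing for x ≥ 1. -/

import Mathlib

open Real

lemma pisq_gt4 : (4:ℝ) < π ^ 2 := by nlinarith [pi_gt_three]

lemma denom_pos {t : ℝ} (ht : 1 ≤ t) : 0 < t - 4 / (t * π ^ 2) := by
  have h4 : (4:ℝ) < π ^ 2 := pisq_gt4
  have ht0 : (0:ℝ) < t := by linarith
  have : 4 / (t * π ^ 2) < 1 := by
    rw [div_lt_one (by positivity)]
    nlinarith
  linarith

theorem extrema_ratio_strictMono :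
    StrictMonoOn
      (fun x : ℝ =>
        (4 * x + 1 - 4 / ((4 * x + 1) * π ^ 2)) /
          (4 * x + 3 - 4 / ((4 * x + 3) * π ^ 2)))
      (Set.Ici (1 : ℝ)) := by
  have hP : (4:ℝ) < π ^ 2 := pisq_gt4
  have hP0 : (0:ℝ) < π ^ 2 := by positivity
  have hπ : π ≠ 0 := pi_ne_zero
  apply strictMonoOn_of_deriv_pos (convex_Ici 1)
  · apply ContinuousOn.div
    · apply ContinuousOn.sub (by fun_prop)
      apply ContinuousOn.div continuousOn_const (by fun_prop)
      intro x hx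
      have hx1 : (1:ℝ) ≤ x := hx
      have : (0:ℝ) < 4 * x + 1 := by linarith
      positivity
    · apply ContinuousOn.sub (by fun_prop)
      apply ContinuousOn.div continuousOn_const (by fun_prop)
      intro x hx
      have hx1 : (1:ℝ) ≤ x := hx
      have : (0:ℝ) < 4 * x + 3 := by linarith
      positivity
    · intro x hx
      exact ne_of_gt (denom_pos (by linarith [Set.mem_Ici.mp hx]))
  · intro x hx
    rw [interior_Ici] at hx
    have hx1 : (1:ℝ) < x := hx
    have hu : (0:ℝ) < 4 * x + 1 := by linarith
    have hv : (0:ℝ) < 4 * x + 3 := by linarith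
    have huP : (4 * x + 1) * π ^ 2 ≠ 0 := by positivity
    have hvP : (4 * x + 3) * π ^ 2 ≠ 0 := by positivity
    have hD : 0 < 4 * x + 3 - 4 / ((4 * x + 3) * π ^ 2) := denom_pos (by linarith)
    -- derivative of the numerator
    have h1 : HasDerivAt (fun x : ℝ => 4 * x + 1) 4 x := by
      simpa using ((hasDerivAt_id x).const_mul 4).add_const 1
    have h1' : HasDerivAt (fun x : ℝ => (4 * x + 1) * π ^ 2) (4 * π ^ 2) x :=
      h1.mul_const _
    have hN : HasDerivAt (fun x : ℝ => 4 * x + 1 - 4 / ((4 * x + 1) * π ^ 2))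
        (4 - (0 * ((4 * x + 1) * π ^ 2) - 4 * (4 * π ^ 2)) / ((4 * x + 1) * π ^ 2) ^ 2) x :=
      h1.sub ((hasDerivAt_const x (4:ℝ)).div h1' huP)
    have h2 : HasDerivAt (fun x : ℝ => 4 * x + 3) 4 x := by
      simpa using ((hasDerivAt_id x).const_mul 4).add_const 3
    have h2' : HasDerivAt (fun x : ℝ => (4 * x + 3) * π ^ 2) (4 * π ^ 2) x :=
      h2.mul_const _
    have hDd : HasDerivAt (fun x : ℝ => 4 * x + 3 - 4 / ((4 * x + 3) * π ^ 2))
        (4 - (0 * ((4 * x + 3) * π ^ 2) - 4 * (4 * π ^ 2)) / ((4 * x + 3) * π ^ 2) ^ 2) x :=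
      h2.sub ((hasDerivAt_const x (4:ℝ)).div h2' hvP)
    have hf : HasDerivAt (fun x : ℝ => (4 * x + 1 - 4 / ((4 * x + 1) * π ^ 2)) /
        (4 * x + 3 - 4 / ((4 * x + 3) * π ^ 2))) _ x := hN.div hDd (ne_of_gt hD)
    rw [hf.deriv]
    apply div_pos _ (pow_pos hD 2)
    have hu' : (4 * x + 1 : ℝ) ≠ 0 := ne_of_gt hu
    have hv' : (4 * x + 3 : ℝ) ≠ 0 := ne_of_gt hv
    have key : (4 - (0 * ((4 * x + 1) * π ^ 2) - 4 * (4 * π ^ 2)) / ((4 * x + 1) * π ^ 2) ^ 2) *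
          (4 * x + 3 - 4 / ((4 * x + 3) * π ^ 2)) -
        (4 * x + 1 - 4 / ((4 * x + 1) * π ^ 2)) *
          (4 - (0 * ((4 * x + 3) * π ^ 2) - 4 * (4 * π ^ 2)) / ((4 * x + 3) * π ^ 2) ^ 2) =
        (4 * (4 * x + 1) ^ 2 * (4 * x + 3) ^ 2 * (π ^ 2) ^ 2 * 2 +
          16 * π ^ 2 * ((4 * x + 3) ^ 3 - (4 * x + 1) ^ 3 +
            (4 * x + 1) * (4 * x + 3) * 2) - 64 * 2) /
        ((4 * x + 1) ^ 2 * (4 * x + 3) ^ 2 * (π ^ 2) ^ 2) := by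
      field_simp
      ring
    rw [key]
    apply div_pos _ (by positivity)
    nlinarith [sq_nonneg x, sq_nonneg π, hP, hx1]
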